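/- arXiv:1912.02160 — 2 statements merged into one kernel-verified Lean document; each statement's English description precedes it below -/
import Mathlib

section
/- Let Z and X be compact metric spaces with their Borel σ-algebras, ζ a Borel probability measure on Z, ν a Borel probability measure on X, and c : X × X → ℝ continuous and nonnegative. Then the infimum over continuous maps G : Z → X and couplings γ ∈ Γ(G♯ζ, ν) of ∫_{X×X} c(x,y) dγ(x,y) equals the infimum over continuous maps G : Z → X and couplings γ̄ ∈ Γ(ζ, ν) of ∫_{Z×X} c(G(z),y) dγ̄(z,y). -/
open MeasureTheory ProbabilityTheory Real

open Classical in
/-- Kullback–Leibler divergence: `∫ log(dμ/dρ) dμ` if `μ ≪ ρ`, `+∞` otherwise. -/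
noncomputable def KL {Ω : Type*} [MeasurableSpace Ω] (μ ρ : Measure Ω) : EReal :=
  if μ ≪ ρ then ((∫ ω, Real.log ((μ.rnDeriv ρ ω).toReal) ∂μ : ℝ) : EReal) else ⊤

/-- `γ` is a coupling of `μ` and `ν`. -/
def IsCoupling {A B : Type*} [MeasurableSpace A] [MeasurableSpace B]
    (γ : Measure (A × B)) (μ : Measure A) (ν : Measure B) : Prop :=
  IsProbabilityMeasure γ ∧ γ.map Prod.fst = μ ∧ γ.map Prod.snd = ν

lemma map_compProd_comap {Z X : Type*} [MeasurableSpace Z] [MeasurableSpace X]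
    (ζ : Measure Z) [SFinite ζ] {G : Z → X} (hG : Measurable G)
    (κ : ProbabilityTheory.Kernel X X) [ProbabilityTheory.IsSFiniteKernel κ] :
    (ζ ⊗ₘ (κ.comap G hG)).map (Prod.map G id) = (ζ.map G) ⊗ₘ κ := by
  ext s hs
  rw [Measure.map_apply (hG.prodMap measurable_id) hs,
    Measure.compProd_apply (hs.preimage (hG.prodMap measurable_id)),
    Measure.compProd_apply hs,
    lintegral_map (ProbabilityTheory.Kernel.measurable_kernel_prodMk_left hs) hG]
  rfl

theorem minimum_kantorovich_reparameterization
    {Z X : Type*} [MetricSpace Z] [CompactSpace Z] [MeasurableSpace Z] [BorelSpace Z]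
    [MetricSpace X] [CompactSpace X] [MeasurableSpace X] [BorelSpace X]
    (ζ : Measure Z) [IsProbabilityMeasure ζ] (ν : Measure X) [IsProbabilityMeasure ν]
    (c : X × X → ℝ) (hc : Continuous c) (hc0 : ∀ p, 0 ≤ c p) :
    (⨅ G : C(Z, X), ⨅ γ : {γ : Measure (X × X) // IsCoupling γ (ζ.map G) ν},
      ((∫ p, c p ∂γ.1 : ℝ) : EReal))
    =
    ⨅ G : C(Z, X), ⨅ γ : {γ : Measure (Z × X) // IsCoupling γ ζ ν},
      ((∫ p, c (G p.1, p.2) ∂γ.1 : ℝ) : EReal) := by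
  have hX : Nonempty X := Measure.nonempty_of_neZero ν
  refine iInf_congr fun G => ?_
  have hGm : Measurable (G : Z → X) := G.continuous.measurable
  have hmap : Measurable (Prod.map (G : Z → X) (id : X → X)) := hGm.prodMap measurable_id
  have hint : ∀ (μ : Measure (Z × X)),
      ∫ p, c p ∂(μ.map (Prod.map (G : Z → X) id)) = ∫ p, c (G p.1, p.2) ∂μ := by
    intro μ
    rw [integral_map hmap.aemeasurable hc.aestronglyMeasurable]; rfl
  refine le_antisymm (le_iInf fun γb' => ?_) (le_iInf fun γ' => ?_)
  · obtain ⟨γb, hprob, hfst, hsnd⟩ := γb'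
    have hpm : IsProbabilityMeasure (γb.map (Prod.map (G : Z → X) id)) :=
      Measure.isProbabilityMeasure_map hmap.aemeasurable
    refine iInf_le_of_le ⟨γb.map (Prod.map G id), hpm, ?_, ?_⟩ (le_of_eq ?_)
    · rw [Measure.map_map measurable_fst hmap,
        show Prod.fst ∘ Prod.map (G : Z → X) id = G ∘ Prod.fst from rfl,
        ← Measure.map_map hGm measurable_fst, hfst]
    · rw [Measure.map_map measurable_snd hmap,
        show Prod.snd ∘ Prod.map (G : Z → X) id = Prod.snd from rfl, hsnd]
    · exact congrArg _ (hint γb)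
  · obtain ⟨γ1, hprob, hfst, hsnd⟩ := γ'
    have hfst' : γ1.fst = ζ.map G := hfst
    set κ := γ1.condKernel with hκ
    set γb : Measure (Z × X) := ζ ⊗ₘ (κ.comap G hGm) with hγb
    have hkey : γb.map (Prod.map (G : Z → X) id) = γ1 := by
      rw [hγb, map_compProd_comap ζ hGm κ, ← hfst', hκ,
        Measure.disintegrate]
    have hpm : IsProbabilityMeasure γb := by rw [hγb]; infer_instance
    refine iInf_le_of_le ⟨γb, hpm, ?_, ?_⟩ (le_of_eq ?_)
    · show γb.fst = ζ
      rw [hγb, Measure.fst_compProd]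
    · have : (γb.map (Prod.map (G : Z → X) id)).map Prod.snd = γb.map Prod.snd := by
        rw [Measure.map_map measurable_snd hmap,
          show Prod.snd ∘ Prod.map (G : Z → X) id = Prod.snd from rfl]
      rw [← this, hkey, hsnd]
    · have hIeq : ∫ p, c (G p.1, p.2) ∂γb = ∫ p, c p ∂γ1 := by
        rw [← hint γb, hkey]
      exact congrArg _ hIeq
end

section
/- Let X be a compact metric space with its Borel σ-algebra, μ and ν Borel probability measures on X, and c : X × X → ℝ continuous and nonnegative with c(x,y) = 0 whenever x = y. Define the Sinkhorn loss S_{c,ε}(μ,ν) = W_{c,ε}(μ,ν) − (1/2)·W_{c,ε}(μ,μ) − (1/2)·W_{c,ε}(ν,ν). Then lim_{ε → 0⁺} S_{c,ε}(μ,ν) = W_c(μ,ν), the unregularized optimal transport cost. -/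
open MeasureTheory Real

/-- Entropically smoothed optimal transport cost. -/
noncomputable def Wce {X : Type*} [MeasurableSpace X]
    (c : X × X → ℝ) (ε : ℝ) (μ ν : Measure X) : EReal :=
  ⨅ γ : {γ : Measure (X × X) // IsCoupling γ μ ν},
    ((∫ p, c p ∂γ.1 : ℝ) : EReal) + (ε : EReal) * KL γ.1 (μ.prod ν)

/-- The Sinkhorn loss. -/
noncomputable def Sinkhorn {X : Type*} [MeasurableSpace X]
    (c : X × X → ℝ) (ε : ℝ) (μ ν : Measure X) : EReal :=
  Wce c ε μ ν - ((1 / 2 : ℝ) : EReal) * Wce c ε μ μ - ((1 / 2 : ℝ) : EReal) * Wce c ε ν ν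

open Set Filter

lemma integral_log_rnDeriv_nonneg {Ω : Type*} [MeasurableSpace Ω] (μ ρ : Measure Ω)
    [IsProbabilityMeasure μ] [IsProbabilityMeasure ρ] (hac : μ ≪ ρ) :
    0 ≤ ∫ ω, Real.log ((μ.rnDeriv ρ ω).toReal) ∂μ := by
  set f := μ.rnDeriv ρ with hf
  by_cases hint : Integrable (fun ω => Real.log ((f ω).toReal)) μ
  · -- g = toReal of inverse
    set g : Ω → ℝ := fun ω => ((f ω)⁻¹).toReal with hg
    have hfm : Measurable f := Measure.measurable_rnDeriv μ ρ
    have hgm : Measurable g := (hfm.inv).ennreal_toReal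
    -- lintegral bound
    have hlig : ∫⁻ ω, ENNReal.ofReal (g ω) ∂μ ≤ 1 := by
      have h1 : ∫⁻ ω, ENNReal.ofReal (g ω) ∂μ ≤ ∫⁻ ω, (f ω)⁻¹ ∂μ := by
        refine lintegral_mono fun ω => ?_
        simp only [hg]
        exact ENNReal.ofReal_toReal_le
      have h2 : ∫⁻ ω, (f ω)⁻¹ ∂μ = ∫⁻ ω, (f ω)⁻¹ * f ω ∂ρ := by
        conv_lhs => rw [← Measure.withDensity_rnDeriv_eq μ ρ hac]
        rw [lintegral_withDensity_eq_lintegral_mul ρ (f := μ.rnDeriv ρ) hfm (g := fun ω => (f ω)⁻¹) hfm.inv]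
        exact lintegral_congr fun ω => mul_comm _ _
      have h3 : ∫⁻ ω, (f ω)⁻¹ * f ω ∂ρ ≤ ∫⁻ _, 1 ∂ρ := by
        refine lintegral_mono fun ω => ?_
        rcases eq_or_ne (f ω) 0 with h | h
        · simp [h]
        rcases eq_or_ne (f ω) ⊤ with h' | h'
        · simp [h']
        · rw [ENNReal.inv_mul_cancel h h']
      calc ∫⁻ ω, ENNReal.ofReal (g ω) ∂μ ≤ ∫⁻ ω, (f ω)⁻¹ * f ω ∂ρ := h2 ▸ h1
        _ ≤ ∫⁻ _, 1 ∂ρ := h3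
        _ = 1 := by simp
    have hgint : Integrable g μ := by
      refine ⟨hgm.aestronglyMeasurable, ?_⟩
      rw [hasFiniteIntegral_iff_ofReal ?_]
      · exact lt_of_le_of_lt hlig (by norm_num)
      · exact Filter.Eventually.of_forall fun ω => ENNReal.toReal_nonneg
    have hgle : ∫ ω, g ω ∂μ ≤ 1 := by
      rw [integral_eq_lintegral_of_nonneg_ae
        (Filter.Eventually.of_forall fun ω => ENNReal.toReal_nonneg) hgm.aestronglyMeasurable]
      calc (∫⁻ ω, ENNReal.ofReal (g ω) ∂μ).toReal ≤ (1 : ENNReal).toReal :=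
            ENNReal.toReal_mono (by norm_num) hlig
        _ = 1 := by simp
    -- pointwise bound a.e.
    have hae : ∀ᵐ ω ∂μ, 1 - g ω ≤ Real.log ((f ω).toReal) := by
      have hpos := Measure.rnDeriv_pos hac
      have hlt : ∀ᵐ ω ∂μ, f ω < ⊤ := hac.ae_le (Measure.rnDeriv_lt_top μ ρ)
      filter_upwards [hpos, hlt] with ω h0 hT
      have htr : 0 < (f ω).toReal := ENNReal.toReal_pos h0.ne' hT.ne
      have hlog : Real.log ((f ω).toReal)⁻¹ ≤ ((f ω).toReal)⁻¹ - 1 :=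
        Real.log_le_sub_one_of_pos (by positivity)
      rw [Real.log_inv] at hlog
      have : g ω = ((f ω).toReal)⁻¹ := ENNReal.toReal_inv _
      rw [this]; linarith
    have h1 : ∫ ω, (1 - g ω) ∂μ ≤ ∫ ω, Real.log ((f ω).toReal) ∂μ :=
      integral_mono_ae ((integrable_const 1).sub hgint) hint hae
    have h2 : ∫ ω, (1 - g ω) ∂μ = 1 - ∫ ω, g ω ∂μ := by
      rw [integral_sub (integrable_const 1) hgint]; simp
    linarith
  · rw [integral_undef hint]

lemma KL_nonneg {Ω : Type*} [MeasurableSpace Ω] (μ ρ : Measure Ω)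
    [IsProbabilityMeasure μ] [IsProbabilityMeasure ρ] : 0 ≤ KL μ ρ := by
  unfold KL
  split_ifs with h
  · exact_mod_cast integral_log_rnDeriv_nonneg μ ρ h
  · exact le_top

lemma KL_self {Ω : Type*} [MeasurableSpace Ω] (ρ : Measure Ω) [SigmaFinite ρ] :
    KL ρ ρ = ((0 : ℝ) : EReal) := by
  unfold KL
  rw [if_pos Measure.AbsolutelyContinuous.rfl]
  have h : ∀ᵐ ω ∂ρ, Real.log ((ρ.rnDeriv ρ ω).toReal) = 0 := by
    filter_upwards [Measure.rnDeriv_self ρ] with ω h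
    rw [h]; simp
  rw [integral_congr_ae h]
  simp

lemma prod_isCoupling {X : Type*} [MeasurableSpace X] (μ ν : Measure X)
    [IsProbabilityMeasure μ] [IsProbabilityMeasure ν] [SigmaFinite ν] :
    IsCoupling (μ.prod ν) μ ν := by
  refine ⟨inferInstance, ?_, ?_⟩
  · rw [Measure.map_fst_prod]; simp
  · rw [Measure.map_snd_prod]; simp

lemma exists_partition {X : Type*} [MetricSpace X] [CompactSpace X] [MeasurableSpace X]
    [BorelSpace X] [Nonempty X] {η : ℝ} (hη : 0 < η) :
    ∃ A : ℕ → Set X, (∀ n, MeasurableSet (A n)) ∧ Pairwise (Function.onFun Disjoint A) ∧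
      (⋃ n, A n) = Set.univ ∧ ∀ n, ∀ x ∈ A n, ∀ y ∈ A n, dist x y < 2 * η := by
  obtain ⟨t, ht⟩ := IsCompact.elim_finite_subcover isCompact_univ
    (fun x : X => Metric.ball x η) (fun x => Metric.isOpen_ball)
    (fun x _ => Set.mem_iUnion.2 ⟨x, Metric.mem_ball_self hη⟩)
  set x0 : X := Classical.arbitrary X
  set L := t.toList with hL
  set ctr : ℕ → X := fun n => L.getD n x0 with hctr
  refine ⟨disjointed (fun n => Metric.ball (ctr n) η), fun n =>
    MeasurableSet.disjointed (fun m => Metric.isOpen_ball.measurableSet) n,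
    disjoint_disjointed _, ?_, ?_⟩
  · rw [iUnion_disjointed]
    apply Set.eq_univ_of_univ_subset
    intro z hz
    obtain ⟨y, hyt, hzy⟩ := Set.mem_iUnion₂.1 (ht (Set.mem_univ z))
    obtain ⟨i, hi, hy⟩ := List.mem_iff_getElem.1 (Finset.mem_toList.2 hyt)
    refine Set.mem_iUnion.2 ⟨i, ?_⟩
    have : ctr i = y := by
      rw [hctr]; simp only [List.getD_eq_getElem?_getD]
      rw [List.getElem?_eq_getElem hi]; simp [hy]
    rwa [this]
  · intro n x hx y hy
    have hx' := disjointed_subset _ n hx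
    have hy' := disjointed_subset _ n hy
    calc dist x y ≤ dist x (ctr n) + dist (ctr n) y := dist_triangle _ _ _
      _ < η + η := by
          rw [Metric.mem_ball] at hx' hy'
          rw [dist_comm (ctr n) y] at *
          linarith
      _ = 2 * η := by ring

lemma block_approx {X : Type*} [MetricSpace X] [CompactSpace X] [MeasurableSpace X] [BorelSpace X]
    (μ ν : Measure X) [IsProbabilityMeasure μ] [IsProbabilityMeasure ν]
    (c : X × X → ℝ) (hc : Continuous c) (hc0 : ∀ p, 0 ≤ c p)
    (γs : Measure (X × X)) (hγ : IsCoupling γs μ ν) {δ : ℝ} (hδ : 0 < δ) :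
    ∃ γ : Measure (X × X), IsCoupling γ μ ν ∧ γ ≪ μ.prod ν ∧
      ∫ p, c p ∂γ ≤ ∫ p, c p ∂γs + δ := by
  classical
  haveI : Nonempty X := by
    by_contra h
    rw [not_nonempty_iff] at h
    have h1 : μ Set.univ = 1 := measure_univ
    rw [Set.univ_eq_empty_iff.2 h] at h1
    simp at h1
  haveI hγp : IsProbabilityMeasure γs := hγ.1
  -- uniform continuity
  obtain ⟨r, hr, hmod⟩ := Metric.uniformContinuous_iff.1
    (CompactSpace.uniformContinuous_of_continuous hc) (δ/2) (by linarith)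
  -- partition
  obtain ⟨A, hAm, hAd, hAu, hAdiam⟩ := exists_partition (X := X) (η := r/2) (by linarith)
  set cell : ℕ × ℕ → Set (X × X) := fun ij => (A ij.1) ×ˢ (A ij.2) with hcell
  have cellm : ∀ ij, MeasurableSet (cell ij) := fun ij => (hAm ij.1).prod (hAm ij.2)
  have celld : Pairwise (Function.onFun Disjoint cell) := by
    intro ij kl hne
    rw [Function.onFun, Set.disjoint_left]
    rintro ⟨x, y⟩ hp hq
    simp only [hcell, Set.mem_prod] at hp hq
    rcases Prod.mk.injEq .. ▸ (fun h => hne (Prod.ext h.1 h.2) : ¬(ij.1 = kl.1 ∧ ij.2 = kl.2)) with h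
    by_cases h1 : ij.1 = kl.1
    · have h2 : ij.2 ≠ kl.2 := fun h2 => hne (Prod.ext h1 h2)
      exact Set.disjoint_left.1 (hAd h2) hp.2 hq.2
    · exact Set.disjoint_left.1 (hAd h1) hp.1 hq.1
  have cellu : (⋃ ij, cell ij) = Set.univ := by
    rw [hcell]
    rw [Set.iUnion_prod A A]  -- might need exact form
    rw [hAu, Set.univ_prod_univ]
  -- distance bound on cells
  have hkey : ∀ ij, ∀ p ∈ cell ij, ∀ q ∈ cell ij, c p ≤ c q + δ/2 := by
    intro ij p hp q hq
    simp only [hcell, Set.mem_prod] at hp hq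
    have hd : dist p q < r := by
      rw [Prod.dist_eq, max_lt_iff]
      constructor
      · have := hAdiam ij.1 p.1 hp.1 q.1 hq.1; linarith
      · have := hAdiam ij.2 p.2 hp.2 q.2 hq.2; linarith
    have := hmod hd
    rw [Real.dist_eq, abs_sub_lt_iff] at this
    linarith [this.1]
  -- basic measures
  set P : ℕ × ℕ → ENNReal := fun ij => γs (cell ij) with hP
  have hPμ : ∀ ij, P ij ≤ μ (A ij.1) := by
    intro ij
    have h1 : cell ij ⊆ Prod.fst ⁻¹' (A ij.1) := fun p hp => (Set.mem_prod.1 hp).1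
    calc P ij ≤ γs (Prod.fst ⁻¹' (A ij.1)) := measure_mono h1
      _ = (γs.map Prod.fst) (A ij.1) := (Measure.map_apply measurable_fst (hAm ij.1)).symm
      _ = μ (A ij.1) := by rw [hγ.2.1]
  have hPν : ∀ ij, P ij ≤ ν (A ij.2) := by
    intro ij
    have h1 : cell ij ⊆ Prod.snd ⁻¹' (A ij.2) := fun p hp => (Set.mem_prod.1 hp).2
    calc P ij ≤ γs (Prod.snd ⁻¹' (A ij.2)) := measure_mono h1
      _ = (γs.map Prod.snd) (A ij.2) := (Measure.map_apply measurable_snd (hAm ij.2)).symm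
      _ = ν (A ij.2) := by rw [hγ.2.2]
  set coef : ℕ × ℕ → ENNReal := fun ij => P ij / (μ (A ij.1) * ν (A ij.2)) with hcoef
  set m : ℕ × ℕ → Measure (X × X) :=
    fun ij => (μ.restrict (A ij.1)).prod (ν.restrict (A ij.2)) with hm
  have hms : ∀ ij, m ij = (μ.prod ν).restrict (cell ij) := fun ij => Measure.prod_restrict _ _
  set γ : Measure (X × X) := Measure.sum (fun ij => coef ij • m ij) with hγdef
  have hμfin : ∀ i, μ (A i) ≠ ⊤ := fun i => measure_ne_top μ _
  have hνfin : ∀ j, ν (A j) ≠ ⊤ := fun j => measure_ne_top ν _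
  have coef_mul : ∀ ij, coef ij * (μ (A ij.1) * ν (A ij.2)) = P ij := by
    intro ij
    by_cases h : μ (A ij.1) * ν (A ij.2) = 0
    · have hP0 : P ij = 0 := by
        rcases mul_eq_zero.1 h with h' | h'
        · exact le_antisymm (h' ▸ hPμ ij) zero_le
        · exact le_antisymm (h' ▸ hPν ij) zero_le
      rw [h, mul_zero, hP0]
    · exact ENNReal.div_mul_cancel h (ENNReal.mul_ne_top (hμfin _) (hνfin _))
  -- marginal fst
  have happly : ∀ (s : Set (X × X)), MeasurableSet s → γ s = ∑' ij, coef ij * m ij s := by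
    intro s hs
    rw [hγdef, Measure.sum_apply _ hs]
    exact tsum_congr fun ij => by rw [Measure.smul_apply, smul_eq_mul]
  have hmapfst : γ.map Prod.fst = μ := by
    ext s hs
    rw [Measure.map_apply measurable_fst hs, happly _ (measurable_fst hs)]
    have hpre : Prod.fst ⁻¹' s = s ×ˢ (Set.univ : Set X) := by
      ext p; simp [Set.mem_prod]
    have hterm : ∀ ij : ℕ × ℕ, coef ij * m ij (Prod.fst ⁻¹' s)
        = coef ij * (μ (s ∩ A ij.1) * ν (A ij.2)) := by
      intro ij
      rw [hpre, hm]
      rw [Measure.prod_prod, Measure.restrict_apply hs, Measure.restrict_apply MeasurableSet.univ,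
        Set.univ_inter]
    rw [tsum_congr hterm, ENNReal.tsum_prod']
    have hinner : ∀ i, ∑' j, coef (i, j) * (μ (s ∩ A i) * ν (A j)) = μ (s ∩ A i) := by
      intro i
      by_cases hμi : μ (A i) = 0
      · have hsi : μ (s ∩ A i) = 0 :=
          measure_mono_null Set.inter_subset_right hμi
        simp [hsi]
      · have hterm2 : ∀ j, coef (i, j) * (μ (s ∩ A i) * ν (A j))
            = P (i, j) * (μ (s ∩ A i) / μ (A i)) := by
          intro j
          by_cases hνj : ν (A j) = 0
          · have hP0 : P (i, j) = 0 := le_antisymm (hνj ▸ hPν (i, j)) zero_le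
            simp [hcoef, hP0, hνj]
          · rw [hcoef]
            simp only []
            rw [div_eq_mul_inv, div_eq_mul_inv,
              ENNReal.mul_inv (Or.inl hμi) (Or.inl (hμfin i))]
            calc P (i, j) * ((μ (A i))⁻¹ * (ν (A j))⁻¹) * (μ (s ∩ A i) * ν (A j))
                = P (i, j) * (μ (s ∩ A i) * (μ (A i))⁻¹) * ((ν (A j))⁻¹ * ν (A j)) := by ring
              _ = P (i, j) * (μ (s ∩ A i) * (μ (A i))⁻¹) := by
                  rw [ENNReal.inv_mul_cancel hνj (hνfin j), mul_one]
        rw [tsum_congr hterm2, ENNReal.tsum_mul_right]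
        have hsum : ∑' j, P (i, j) = μ (A i) := by
          have hdisj : Pairwise (Function.onFun Disjoint fun j => (A i) ×ˢ (A j)) := by
            intro j k hjk
            rw [Function.onFun, Set.disjoint_left]
            rintro ⟨x, y⟩ hp hq
            exact Set.disjoint_left.1 (hAd hjk) hp.2 hq.2
          have := measure_iUnion (μ := γs) hdisj (fun j => (hAm i).prod (hAm j))
          rw [← Set.prod_iUnion, hAu] at this
          rw [hP]
          simp only [hcell]
          rw [← this]
          have : (A i) ×ˢ (Set.univ : Set X) = Prod.fst ⁻¹' (A i) := by
            ext p; simp [Set.mem_prod]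
          rw [this, ← Measure.map_apply measurable_fst (hAm i), hγ.2.1]
        rw [hsum, div_eq_mul_inv]
        calc μ (A i) * (μ (s ∩ A i) * (μ (A i))⁻¹)
            = μ (s ∩ A i) * (μ (A i) * (μ (A i))⁻¹) := by ring
          _ = μ (s ∩ A i) := by rw [ENNReal.mul_inv_cancel hμi (hμfin i), mul_one]
    rw [tsum_congr hinner]
    have hdisj : Pairwise (Function.onFun Disjoint fun i => s ∩ A i) := fun i j hij =>
      Set.disjoint_left.2 fun x hx hy =>
        Set.disjoint_left.1 (hAd hij) hx.2 hy.2
    rw [← measure_iUnion hdisj (fun i => hs.inter (hAm i)), ← Set.inter_iUnion, hAu,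
      Set.inter_univ]
  -- marginal snd
  have hmapsnd : γ.map Prod.snd = ν := by
    ext s hs
    rw [Measure.map_apply measurable_snd hs, happly _ (measurable_snd hs)]
    have hpre : Prod.snd ⁻¹' s = (Set.univ : Set X) ×ˢ s := by
      ext p; simp [Set.mem_prod]
    have hterm : ∀ ij : ℕ × ℕ, coef ij * m ij (Prod.snd ⁻¹' s)
        = coef ij * (μ (A ij.1) * ν (s ∩ A ij.2)) := by
      intro ij
      rw [hpre, hm]
      rw [Measure.prod_prod, Measure.restrict_apply MeasurableSet.univ,
        Measure.restrict_apply hs, Set.univ_inter]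
    rw [tsum_congr hterm, ENNReal.tsum_prod', ENNReal.tsum_comm]
    have hinner : ∀ j, ∑' i, coef (i, j) * (μ (A i) * ν (s ∩ A j)) = ν (s ∩ A j) := by
      intro j
      by_cases hνj : ν (A j) = 0
      · have hsj : ν (s ∩ A j) = 0 :=
          measure_mono_null Set.inter_subset_right hνj
        simp [hsj]
      · have hterm2 : ∀ i, coef (i, j) * (μ (A i) * ν (s ∩ A j))
            = P (i, j) * (ν (s ∩ A j) / ν (A j)) := by
          intro i
          by_cases hμi : μ (A i) = 0
          · have hP0 : P (i, j) = 0 := le_antisymm (hμi ▸ hPμ (i, j)) zero_le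
            simp [hcoef, hP0, hμi]
          · rw [hcoef]
            simp only []
            rw [div_eq_mul_inv, div_eq_mul_inv,
              ENNReal.mul_inv (Or.inl hμi) (Or.inl (hμfin i))]
            calc P (i, j) * ((μ (A i))⁻¹ * (ν (A j))⁻¹) * (μ (A i) * ν (s ∩ A j))
                = P (i, j) * (ν (s ∩ A j) * (ν (A j))⁻¹) * ((μ (A i))⁻¹ * μ (A i)) := by ring
              _ = P (i, j) * (ν (s ∩ A j) * (ν (A j))⁻¹) := by
                  rw [ENNReal.inv_mul_cancel hμi (hμfin i), mul_one]
        rw [tsum_congr hterm2, ENNReal.tsum_mul_right]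
        have hsum : ∑' i, P (i, j) = ν (A j) := by
          have hdisj : Pairwise (Function.onFun Disjoint fun i => (A i) ×ˢ (A j)) := by
            intro i k hik
            rw [Function.onFun, Set.disjoint_left]
            rintro ⟨x, y⟩ hp hq
            exact Set.disjoint_left.1 (hAd hik) hp.1 hq.1
          have := measure_iUnion (μ := γs) hdisj (fun i => (hAm i).prod (hAm j))
          rw [← Set.iUnion_prod_const, hAu] at this
          rw [hP]
          simp only [hcell]
          rw [← this]
          have : (Set.univ : Set X) ×ˢ (A j) = Prod.snd ⁻¹' (A j) := by
            ext p; simp [Set.mem_prod]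
          rw [this, ← Measure.map_apply measurable_snd (hAm j), hγ.2.2]
        rw [hsum, div_eq_mul_inv]
        calc ν (A j) * (ν (s ∩ A j) * (ν (A j))⁻¹)
            = ν (s ∩ A j) * (ν (A j) * (ν (A j))⁻¹) := by ring
          _ = ν (s ∩ A j) := by rw [ENNReal.mul_inv_cancel hνj (hνfin j), mul_one]
    rw [tsum_congr hinner]
    have hdisj : Pairwise (Function.onFun Disjoint fun j => s ∩ A j) := fun i j hij =>
      Set.disjoint_left.2 fun x hx hy =>
        Set.disjoint_left.1 (hAd hij) hx.2 hy.2
    rw [← measure_iUnion hdisj (fun j => hs.inter (hAm j)), ← Set.inter_iUnion, hAu,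
      Set.inter_univ]
  haveI hγprob : IsProbabilityMeasure γ := by
    constructor
    have : γ (Prod.fst ⁻¹' (Set.univ : Set X)) = (γ.map Prod.fst) Set.univ :=
      (Measure.map_apply measurable_fst MeasurableSet.univ).symm
    rw [Set.preimage_univ] at this
    rw [this, hmapfst]
    exact measure_univ
  have hac : γ ≪ μ.prod ν := by
    refine Measure.AbsolutelyContinuous.mk fun s hs h0 => ?_
    rw [happly s hs]
    refine ENNReal.tsum_eq_zero.2 fun ij => ?_
    rw [hms, Measure.restrict_apply hs, measure_mono_null Set.inter_subset_left h0, mul_zero]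
  refine ⟨γ, ⟨hγprob, hmapfst, hmapsnd⟩, hac, ?_⟩
  -- choose representative points in cells
  set q : ℕ × ℕ → X × X :=
    fun ij => if h : (cell ij).Nonempty then h.some else Classical.arbitrary _ with hqdef
  have hq : ∀ ij, (cell ij).Nonempty → q ij ∈ cell ij := by
    intro ij h
    rw [hqdef]; simp only [dif_pos h]; exact h.some_mem
  -- boundedness of c
  obtain ⟨pm, -, hpm⟩ := isCompact_univ.exists_isMaxOn Set.univ_nonempty hc.continuousOn
  have hγsfin : ∫⁻ p, ENNReal.ofReal (c p) ∂γs ≠ ⊤ := by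
    refine ne_top_of_le_ne_top ?_ (lintegral_mono fun p =>
      ENNReal.ofReal_le_ofReal (hpm (Set.mem_univ p)))
    rw [lintegral_const]
    exact ENNReal.mul_ne_top ENNReal.ofReal_ne_top (measure_ne_top _ _)
  have hPsum : ∑' ij, P ij = 1 := by
    rw [hP]
    simp only []
    rw [← measure_iUnion celld cellm, cellu]
    exact measure_univ
  have hlint : ∫⁻ p, ENNReal.ofReal (c p) ∂γ
      ≤ ∫⁻ p, ENNReal.ofReal (c p) ∂γs + ENNReal.ofReal δ := by
    have step1 : ∫⁻ p, ENNReal.ofReal (c p) ∂γ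
        = ∑' ij, coef ij * ∫⁻ p in cell ij, ENNReal.ofReal (c p) ∂(μ.prod ν) := by
      rw [hγdef, lintegral_sum_measure]
      exact tsum_congr fun ij => by rw [lintegral_smul_measure, hms, smul_eq_mul]
    have step2 : ∀ ij, coef ij * ∫⁻ p in cell ij, ENNReal.ofReal (c p) ∂(μ.prod ν)
        ≤ P ij * ENNReal.ofReal (c (q ij)) + P ij * ENNReal.ofReal (δ/2) := by
      intro ij
      rcases (cell ij).eq_empty_or_nonempty with he | hne
      · rw [he, Measure.restrict_empty, lintegral_zero_measure, mul_zero]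
        exact zero_le
      · have h1 : ∫⁻ p in cell ij, ENNReal.ofReal (c p) ∂(μ.prod ν)
            ≤ ENNReal.ofReal (c (q ij) + δ/2) * (μ (A ij.1) * ν (A ij.2)) := by
          calc ∫⁻ p in cell ij, ENNReal.ofReal (c p) ∂(μ.prod ν)
              ≤ ∫⁻ _ in cell ij, ENNReal.ofReal (c (q ij) + δ/2) ∂(μ.prod ν) :=
                setLIntegral_mono measurable_const fun p hp =>
                  ENNReal.ofReal_le_ofReal (hkey ij p hp (q ij) (hq ij hne))
            _ = ENNReal.ofReal (c (q ij) + δ/2) * (μ.prod ν) (cell ij) :=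
                setLIntegral_const _ _
            _ = ENNReal.ofReal (c (q ij) + δ/2) * (μ (A ij.1) * ν (A ij.2)) := by
                rw [hcell]; simp only []; rw [Measure.prod_prod]
        calc coef ij * ∫⁻ p in cell ij, ENNReal.ofReal (c p) ∂(μ.prod ν)
            ≤ coef ij * (ENNReal.ofReal (c (q ij) + δ/2) * (μ (A ij.1) * ν (A ij.2))) :=
              mul_le_mul_right h1 _
          _ = ENNReal.ofReal (c (q ij) + δ/2) * (coef ij * (μ (A ij.1) * ν (A ij.2))) := by
              ring
          _ = ENNReal.ofReal (c (q ij) + δ/2) * P ij := by rw [coef_mul]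
          _ = P ij * ENNReal.ofReal (c (q ij)) + P ij * ENNReal.ofReal (δ/2) := by
              rw [ENNReal.ofReal_add (hc0 _) (by linarith : (0:ℝ) ≤ δ/2)]
              ring
    have step4 : ∑' ij, P ij * ENNReal.ofReal (c (q ij))
        ≤ ∫⁻ p, ENNReal.ofReal (c p) ∂γs + ENNReal.ofReal (δ/2) := by
      have hterm : ∀ ij, P ij * ENNReal.ofReal (c (q ij))
          ≤ ∫⁻ p in cell ij, ENNReal.ofReal (c p) ∂γs + ENNReal.ofReal (δ/2) * P ij := by
        intro ij
        rcases (cell ij).eq_empty_or_nonempty with he | hne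
        · have : P ij = 0 := by rw [hP]; simp only []; rw [he]; exact measure_empty
          simp [this]
        · have h2 : P ij * ENNReal.ofReal (c (q ij))
              = ∫⁻ _ in cell ij, ENNReal.ofReal (c (q ij)) ∂γs := by
            rw [setLIntegral_const, mul_comm]
          rw [h2]
          calc ∫⁻ _ in cell ij, ENNReal.ofReal (c (q ij)) ∂γs
              ≤ ∫⁻ p in cell ij, (ENNReal.ofReal (c p) + ENNReal.ofReal (δ/2)) ∂γs := by
                refine setLIntegral_mono
                  ((hc.measurable.ennreal_ofReal).add measurable_const) fun p hp => ?_
                calc ENNReal.ofReal (c (q ij)) ≤ ENNReal.ofReal (c p + δ/2) :=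
                      ENNReal.ofReal_le_ofReal (hkey ij (q ij) (hq ij hne) p hp)
                  _ ≤ ENNReal.ofReal (c p) + ENNReal.ofReal (δ/2) := ENNReal.ofReal_add_le
            _ = ∫⁻ p in cell ij, ENNReal.ofReal (c p) ∂γs + ENNReal.ofReal (δ/2) * P ij := by
                rw [lintegral_add_right _ measurable_const, setLIntegral_const]
      calc ∑' ij, P ij * ENNReal.ofReal (c (q ij))
          ≤ ∑' ij, (∫⁻ p in cell ij, ENNReal.ofReal (c p) ∂γs + ENNReal.ofReal (δ/2) * P ij) :=
            ENNReal.tsum_le_tsum hterm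
        _ = (∑' ij, ∫⁻ p in cell ij, ENNReal.ofReal (c p) ∂γs)
            + ENNReal.ofReal (δ/2) * ∑' ij, P ij := by
            rw [ENNReal.tsum_add, ENNReal.tsum_mul_left]
        _ = ∫⁻ p, ENNReal.ofReal (c p) ∂γs + ENNReal.ofReal (δ/2) := by
            rw [hPsum, mul_one,
              ← lintegral_iUnion cellm celld (fun p => ENNReal.ofReal (c p)), cellu,
              setLIntegral_univ]
    calc ∫⁻ p, ENNReal.ofReal (c p) ∂γ
        ≤ ∑' ij, (P ij * ENNReal.ofReal (c (q ij)) + P ij * ENNReal.ofReal (δ/2)) := by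
          rw [step1]; exact ENNReal.tsum_le_tsum step2
      _ = (∑' ij, P ij * ENNReal.ofReal (c (q ij))) + ENNReal.ofReal (δ/2) := by
          rw [ENNReal.tsum_add, ENNReal.tsum_mul_right, hPsum, one_mul]
      _ ≤ (∫⁻ p, ENNReal.ofReal (c p) ∂γs + ENNReal.ofReal (δ/2)) + ENNReal.ofReal (δ/2) :=
          add_le_add_left step4 _
      _ = ∫⁻ p, ENNReal.ofReal (c p) ∂γs + ENNReal.ofReal δ := by
          rw [add_assoc, ← ENNReal.ofReal_add (by linarith) (by linarith), add_halves]
  rw [integral_eq_lintegral_of_nonneg_ae (Filter.Eventually.of_forall hc0)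
      hc.aestronglyMeasurable,
    integral_eq_lintegral_of_nonneg_ae (Filter.Eventually.of_forall hc0)
      hc.aestronglyMeasurable]
  have hRfin : ∫⁻ p, ENNReal.ofReal (c p) ∂γs + ENNReal.ofReal δ ≠ ⊤ :=
    ENNReal.add_ne_top.2 ⟨hγsfin, ENNReal.ofReal_ne_top⟩
  have hmono := ENNReal.toReal_mono hRfin hlint
  rwa [ENNReal.toReal_add hγsfin ENNReal.ofReal_ne_top, ENNReal.toReal_ofReal hδ.le] at hmono

lemma Wce_nonneg {X : Type*} [MeasurableSpace X]
    (μ ν : Measure X) [IsProbabilityMeasure μ] [IsProbabilityMeasure ν]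
    (c : X × X → ℝ) (hc0 : ∀ p, 0 ≤ c p) {ε : ℝ} (hε : 0 < ε) :
    0 ≤ Wce c ε μ ν := by
  refine le_iInf fun γ => ?_
  haveI := γ.2.1
  refine add_nonneg ?_ (mul_nonneg (by exact_mod_cast hε.le) (KL_nonneg _ _))
  exact_mod_cast integral_nonneg hc0

lemma Wce_le_prod {X : Type*} [MeasurableSpace X]
    (μ ν : Measure X) [IsProbabilityMeasure μ] [IsProbabilityMeasure ν]
    (c : X × X → ℝ) (ε : ℝ) :
    Wce c ε μ ν ≤ ((∫ p, c p ∂(μ.prod ν) : ℝ) : EReal) := by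
  refine le_trans (iInf_le _ ⟨μ.prod ν, prod_isCoupling μ ν⟩) ?_
  rw [KL_self]
  rw [show (((0 : ℝ) : EReal)) = (0 : EReal) from rfl, mul_zero, add_zero]

lemma Wce_tendsto {X : Type*} [MetricSpace X] [CompactSpace X] [MeasurableSpace X] [BorelSpace X]
    (μ ν : Measure X) [IsProbabilityMeasure μ] [IsProbabilityMeasure ν]
    (c : X × X → ℝ) (hc : Continuous c) (hc0 : ∀ p, 0 ≤ c p) :
    Filter.Tendsto (fun ε : ℝ => Wce c ε μ ν) (nhdsWithin 0 (Set.Ioi 0))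
      (nhds (⨅ γ : {γ : Measure (X × X) // IsCoupling γ μ ν},
        ((∫ p, c p ∂γ.1 : ℝ) : EReal))) := by
  haveI hne : Nonempty {γ : Measure (X × X) // IsCoupling γ μ ν} :=
    ⟨⟨μ.prod ν, prod_isCoupling μ ν⟩⟩
  set W : EReal := ⨅ γ : {γ : Measure (X × X) // IsCoupling γ μ ν},
    ((∫ p, c p ∂γ.1 : ℝ) : EReal) with hWdef
  have hW0 : 0 ≤ W := le_iInf fun γ => by exact_mod_cast integral_nonneg hc0
  have hWne_top : W ≠ ⊤ :=
    ne_top_of_le_ne_top (EReal.coe_ne_top _) (iInf_le _ ⟨μ.prod ν, prod_isCoupling μ ν⟩)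
  have hWne_bot : W ≠ ⊥ := by
    intro h
    rw [h] at hW0
    simp at hW0
  have hWr : ((W.toReal : ℝ) : EReal) = W := EReal.coe_toReal hWne_top hWne_bot
  have hlow : ∀ ε ∈ Set.Ioi (0 : ℝ), W ≤ Wce c ε μ ν := by
    intro ε hε
    refine le_iInf fun γ => ?_
    haveI := γ.2.1
    refine le_trans (iInf_le _ γ) (le_add_of_nonneg_right ?_)
    exact mul_nonneg (by exact_mod_cast (le_of_lt hε)) (KL_nonneg _ _)
  rw [tendsto_order]
  constructor
  · intro a ha
    exact eventually_nhdsWithin_of_forall fun ε hε => lt_of_lt_of_le ha (hlow ε hε)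
  · intro b hb
    obtain ⟨mr, hm1, hm2⟩ := EReal.exists_between_coe_real hb
    set δ0 : ℝ := mr - W.toReal with hδ0def
    have hδ0 : 0 < δ0 := by
      have : W.toReal < mr := by rw [← EReal.coe_lt_coe_iff, hWr]; exact hm1
      simp only [hδ0def]; linarith
    have h1 : W < ((W.toReal + δ0/4 : ℝ) : EReal) := by
      rw [← hWr]
      exact_mod_cast (by linarith : W.toReal < W.toReal + δ0/4)
    obtain ⟨γ1, hγ1⟩ := iInf_lt_iff.1 h1
    have hγ1' : ∫ p, c p ∂γ1.1 < W.toReal + δ0/4 := by exact_mod_cast hγ1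
    obtain ⟨γ2, hcoup2, hac2, hint2⟩ :=
      block_approx μ ν c hc hc0 γ1.1 γ1.2 (show 0 < δ0/4 by linarith)
    set rK : ℝ := ∫ ω, Real.log ((γ2.rnDeriv (μ.prod ν) ω).toReal) ∂γ2 with hrK
    have hKL : KL γ2 (μ.prod ν) = ((rK : ℝ) : EReal) := by
      unfold KL
      rw [if_pos hac2]
    set ε0 : ℝ := (δ0/4) / (|rK| + 1) with hε0def
    have hε0 : 0 < ε0 := by positivity
    filter_upwards [Ioo_mem_nhdsGT_of_mem (Set.left_mem_Ico.2 hε0)] with ε hε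
    have hle : Wce c ε μ ν ≤ ((∫ p, c p ∂γ2 + ε * rK : ℝ) : EReal) := by
      refine le_trans (iInf_le _ ⟨γ2, hcoup2⟩) ?_
      rw [hKL, EReal.coe_add, EReal.coe_mul]
    have hεr : ε * rK < δ0/4 := by
      have h1 : ε * rK ≤ ε * |rK| := mul_le_mul_of_nonneg_left (le_abs_self _) hε.1.le
      have h2 : ε * (|rK| + 1) < ε0 * (|rK| + 1) := by
        have := hε.2
        nlinarith [abs_nonneg rK, hε.1]
      have h3 : ε0 * (|rK| + 1) = δ0/4 := by
        rw [hε0def]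
        field_simp
      nlinarith [abs_nonneg rK, hε.1]
    have hreal : ∫ p, c p ∂γ2 + ε * rK < mr := by
      have hmr : mr = W.toReal + δ0 := by simp only [hδ0def]; ring
      have : ∫ p, c p ∂γ2 < W.toReal + δ0/2 := by linarith
      linarith
    calc Wce c ε μ ν ≤ ((∫ p, c p ∂γ2 + ε * rK : ℝ) : EReal) := hle
      _ < (mr : EReal) := by exact_mod_cast hreal
      _ < b := hm2

lemma iInf_coupling_self_eq_zero {X : Type*} [MetricSpace X] [CompactSpace X]
    [MeasurableSpace X] [BorelSpace X]
    (μ : Measure X) [IsProbabilityMeasure μ]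
    (c : X × X → ℝ) (hc : Continuous c) (hc0 : ∀ p, 0 ≤ c p)
    (hcdiag : ∀ x : X, c (x, x) = 0) :
    (⨅ γ : {γ : Measure (X × X) // IsCoupling γ μ μ},
      ((∫ p, c p ∂γ.1 : ℝ) : EReal)) = 0 := by
  have hdiagm : Measurable (fun x : X => (x, x)) := measurable_id.prodMk measurable_id
  set γd : Measure (X × X) := μ.map (fun x => (x, x)) with hγd
  have hcoup : IsCoupling γd μ μ := by
    refine ⟨Measure.isProbabilityMeasure_map hdiagm.aemeasurable, ?_, ?_⟩
    · rw [hγd, Measure.map_map measurable_fst hdiagm]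
      exact Measure.map_id
    · rw [hγd, Measure.map_map measurable_snd hdiagm]
      exact Measure.map_id
  refine le_antisymm ?_ ?_
  · refine iInf_le_of_le ⟨γd, hcoup⟩ ?_
    have h : ∫ p, c p ∂γd = ∫ x, c (x, x) ∂μ :=
      integral_map hdiagm.aemeasurable hc.aestronglyMeasurable
    rw [h]
    simp [hcdiag]
  · refine le_iInf fun γ => ?_
    exact_mod_cast integral_nonneg hc0

theorem sinkhorn_tendsto_OT_as_eps_to_zero
    {X : Type*} [MetricSpace X] [CompactSpace X] [MeasurableSpace X] [BorelSpace X]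
    (μ ν : Measure X) [IsProbabilityMeasure μ] [IsProbabilityMeasure ν]
    (c : X × X → ℝ) (hc : Continuous c) (hc0 : ∀ p, 0 ≤ c p)
    (hcdiag : ∀ x : X, c (x, x) = 0) :
    Filter.Tendsto (fun ε : ℝ => Sinkhorn c ε μ ν)
      (nhdsWithin 0 (Set.Ioi 0))
      (nhds (⨅ γ : {γ : Measure (X × X) // IsCoupling γ μ ν},
        ((∫ p, c p ∂γ.1 : ℝ) : EReal))) := by
  haveI hne : Nonempty {γ : Measure (X × X) // IsCoupling γ μ ν} :=
    ⟨⟨μ.prod ν, prod_isCoupling μ ν⟩⟩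
  set W : EReal := ⨅ γ : {γ : Measure (X × X) // IsCoupling γ μ ν},
    ((∫ p, c p ∂γ.1 : ℝ) : EReal) with hWdef
  have hW0 : 0 ≤ W := le_iInf fun γ => by exact_mod_cast integral_nonneg hc0
  have hWne_top : W ≠ ⊤ :=
    ne_top_of_le_ne_top (EReal.coe_ne_top _) (iInf_le _ ⟨μ.prod ν, prod_isCoupling μ ν⟩)
  have hWne_bot : W ≠ ⊥ := by
    intro h; rw [h] at hW0; simp at hW0
  have hWr : ((W.toReal : ℝ) : EReal) = W := EReal.coe_toReal hWne_top hWne_bot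
  have h1 := Wce_tendsto μ ν c hc hc0
  have h2 := Wce_tendsto μ μ c hc hc0
  have h3 := Wce_tendsto ν ν c hc hc0
  rw [iInf_coupling_self_eq_zero μ c hc hc0 hcdiag] at h2
  rw [iInf_coupling_self_eq_zero ν c hc hc0 hcdiag] at h3
  have h1' : Filter.Tendsto (fun ε : ℝ => (Wce c ε μ ν).toReal)
      (nhdsWithin 0 (Set.Ioi 0)) (nhds W.toReal) :=
    (EReal.tendsto_toReal hWne_top hWne_bot).comp h1
  have h2' : Filter.Tendsto (fun ε : ℝ => (Wce c ε μ μ).toReal)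
      (nhdsWithin 0 (Set.Ioi 0)) (nhds 0) := by
    have := (EReal.tendsto_toReal (by simp : (0 : EReal) ≠ ⊤)
      (by simp : (0 : EReal) ≠ ⊥)).comp h2
    simpa [Function.comp_def] using this
  have h3' : Filter.Tendsto (fun ε : ℝ => (Wce c ε ν ν).toReal)
      (nhdsWithin 0 (Set.Ioi 0)) (nhds 0) := by
    have := (EReal.tendsto_toReal (by simp : (0 : EReal) ≠ ⊤)
      (by simp : (0 : EReal) ≠ ⊥)).comp h3
    simpa [Function.comp_def] using this
  have hg : Filter.Tendsto (fun ε : ℝ => (Wce c ε μ ν).toReal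
      - (1/2) * (Wce c ε μ μ).toReal - (1/2) * (Wce c ε ν ν).toReal)
      (nhdsWithin 0 (Set.Ioi 0)) (nhds (W.toReal - (1/2) * 0 - (1/2) * 0)) :=
    (h1'.sub (h2'.const_mul _)).sub (h3'.const_mul _)
  rw [show W.toReal - (1/2) * 0 - (1/2) * 0 = W.toReal by ring] at hg
  have hco : Filter.Tendsto (fun ε : ℝ => (((Wce c ε μ ν).toReal
      - (1/2) * (Wce c ε μ μ).toReal - (1/2) * (Wce c ε ν ν).toReal : ℝ) : EReal))
      (nhdsWithin 0 (Set.Ioi 0)) (nhds W) := by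
    rw [← hWr]
    exact EReal.tendsto_coe.2 hg
  refine Filter.Tendsto.congr' ?_ hco
  filter_upwards [self_mem_nhdsWithin] with ε hε
  have hεp : (0 : ℝ) < ε := hε
  -- finiteness of all three Wce values
  have fin : ∀ (ρ σ : Measure X) [IsProbabilityMeasure ρ] [IsProbabilityMeasure σ],
      (((Wce c ε ρ σ).toReal : ℝ) : EReal) = Wce c ε ρ σ := by
    intro ρ σ _ _
    refine EReal.coe_toReal ?_ ?_
    · exact ne_top_of_le_ne_top (EReal.coe_ne_top _) (Wce_le_prod ρ σ c ε)
    · intro h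
      have := Wce_nonneg ρ σ c hc0 hεp
      rw [h] at this
      simp at this
  have e1 := fin μ ν
  have e2 := fin μ μ
  have e3 := fin ν ν
  rw [Sinkhorn, EReal.coe_sub, EReal.coe_sub, EReal.coe_mul, EReal.coe_mul, e1, e2, e3]
end
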